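/- arXiv:2406.06481 — 2 statements merged into one kernel-verified Lean document; each statement's English description precedes it below -/
import Mathlib

section
/- Let (S, μ) be a probability space, X : S → ℝᵖ a measurable random vector, and K > 0 such that for every v ∈ ℝᵖ with ‖v‖₂ ≤ 1 the function s ↦ exp(⟨v, X(s)⟩²/K²) is integrable with ∫ exp(⟨v, X(s)⟩²/K²) dμ(s) ≤ 2. Suppose κ ≥ 1 and κ⁻¹‖v‖₂² ≤ vᵀΩv ≤ κ‖v‖₂² for all v ∈ ℝᵖ. Then for every index j, the regression residual ε_j(s) := X(s)_j − ∑_{k ≠ j} (α*_j)_k X(s)_k is sub-Gaussian with parameter κK in the sense that s ↦ exp(ε_j(s)²/(κK)²) is integrable with ∫ exp(ε_j(s)²/(κK)²) dμ(s) ≤ 2. -/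
open Matrix MeasureTheory

/-- The principal submatrix of `S` obtained by deleting row and column `j`. -/
def delSub {p : ℕ} (S : Matrix (Fin p) (Fin p) ℝ) (j : Fin p) :
    Matrix {k : Fin p // k ≠ j} {k : Fin p // k ≠ j} ℝ :=
  fun k l => S k.1 l.1

/-- Column `j` of `S` with its `j`-th entry deleted. -/
def delCol {p : ℕ} (S : Matrix (Fin p) (Fin p) ℝ) (j : Fin p) :
    {k : Fin p // k ≠ j} → ℝ :=
  fun k => S k.1 j

/-- The population nodewise regression coefficient vector `α*_j = (Σ_{∖j,∖j})⁻¹ Σ_{∖j,j}`. -/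
noncomputable def alphaStar {p : ℕ} (S : Matrix (Fin p) (Fin p) ℝ) (j : Fin p) :
    {k : Fin p // k ≠ j} → ℝ :=
  (delSub S j)⁻¹ *ᵥ delCol S j

/-- Splitting a sum over `Fin p` into the `j`-th term and the rest. -/
lemma sum_split {p : ℕ} (j : Fin p) (g : Fin p → ℝ) :
    ∑ k, g k = g j + ∑ k : {k : Fin p // k ≠ j}, g k.1 := by
  rw [← Finset.add_sum_erase _ g (Finset.mem_univ j)]
  congr 1
  rw [Finset.sum_subtype (p := fun k => k ≠ j) (Finset.univ.erase j)
    (fun k => by simp [Finset.mem_erase]) g]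

/-- Cauchy–Schwarz for positive semidefinite real matrices. -/
lemma cs_psd {n : Type*} [Fintype n] {M : Matrix n n ℝ} (hM : M.PosSemidef)
    (a b : n → ℝ) : (a ⬝ᵥ M *ᵥ b) ^ 2 ≤ (a ⬝ᵥ M *ᵥ a) * (b ⬝ᵥ M *ᵥ b) := by
  have hsym : ∀ x y : n → ℝ, x ⬝ᵥ M *ᵥ y = y ⬝ᵥ M *ᵥ x := by
    intro x y
    have hMT : Mᵀ = M := by
      ext i k
      simpa using hM.1.apply i k
    rw [dotProduct_mulVec, ← mulVec_transpose, hMT, dotProduct_comm]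
  have hpos : ∀ t : ℝ, 0 ≤ (b ⬝ᵥ M *ᵥ b) * (t * t) + (2 * (a ⬝ᵥ M *ᵥ b)) * t
      + (a ⬝ᵥ M *ᵥ a) := by
    intro t
    have h := hM.dotProduct_mulVec_nonneg (a + t • b)
    simp only [star_trivial] at h
    have : (a + t • b) ⬝ᵥ M *ᵥ (a + t • b)
        = (b ⬝ᵥ M *ᵥ b) * (t * t) + (2 * (a ⬝ᵥ M *ᵥ b)) * t + (a ⬝ᵥ M *ᵥ a) := by
      rw [mulVec_add, mulVec_smul, add_dotProduct, smul_dotProduct, dotProduct_add,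
        dotProduct_add, dotProduct_smul, dotProduct_smul, hsym b a]
      simp [smul_eq_mul]; ring
    simpa [this] using h
  have := discrim_le_zero hpos
  rw [discrim] at this
  nlinarith

/-- The principal submatrix deleting row/column `j` of a positive definite matrix
is positive definite. -/
lemma delSub_posDef {p : ℕ} {S : Matrix (Fin p) (Fin p) ℝ} (hS : S.PosDef) (j : Fin p) :
    (delSub S j).PosDef := by
  refine posDef_iff_dotProduct_mulVec.mpr ⟨?_, ?_⟩
  · ext k l
    simpa [delSub, conjTranspose] using (hS.1.apply k.1 l.1)
  · intro x hx
    set e : Fin p → ℝ := fun k => if h : k = j then 0 else x ⟨k, h⟩ with he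
    have he0 : e ≠ 0 := by
      obtain ⟨k, hk⟩ := Function.ne_iff.1 hx
      intro h
      apply hk
      have := congrFun h k.1
      simpa [he, k.2] using this
    have hpos := hS.dotProduct_mulVec_pos he0
    simp only [star_trivial] at hpos
    have : e ⬝ᵥ S *ᵥ e = x ⬝ᵥ (delSub S j) *ᵥ x := by
      show ∑ k, e k * (S *ᵥ e) k = _
      rw [sum_split j]
      have hinner : ∀ k : Fin p, (S *ᵥ e) k = ∑ l : {l : Fin p // l ≠ j}, S k l.1 * x l := by
        intro k
        show ∑ l, S k l * e l = _
        rw [sum_split j]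
        simp only [he, dif_pos rfl, mul_zero, zero_add]
        refine Finset.sum_congr rfl fun l _ => ?_
        rw [dif_neg l.2]
      simp only [he, dif_pos rfl, zero_mul, zero_add]
      refine Finset.sum_congr rfl fun k _ => ?_
      rw [dif_neg k.2, hinner]
      rfl
    rw [this] at hpos
    simpa using hpos

/-- If `X` is a sub-Gaussian random vector (with parameter `K`) and
`κ⁻¹‖v‖₂² ≤ vᵀΩv ≤ κ‖v‖₂²` for all `v` (with `Ω = Σ⁻¹`, `κ ≥ 1`), then for every index `j`
the regression residual `ε_j = X_j − ∑_{k ≠ j} (α*_j)_k X_k` is sub-Gaussian with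
parameter `κK`: `exp(ε_j²/(κK)²)` is integrable with integral at most `2`. -/
theorem stmt_5 (p : ℕ) (hp : 2 ≤ p) (S : Matrix (Fin p) (Fin p) ℝ) (hS : S.PosDef)
    {T : Type*} [MeasurableSpace T] (μ : Measure T) [IsProbabilityMeasure μ]
    (X : T → (Fin p → ℝ)) (hX : Measurable X) (K : ℝ) (hK : 0 < K)
    (hsubG : ∀ v : Fin p → ℝ, Real.sqrt (v ⬝ᵥ v) ≤ 1 →
      Integrable (fun s => Real.exp ((v ⬝ᵥ X s) ^ 2 / K ^ 2)) μ ∧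
        ∫ s, Real.exp ((v ⬝ᵥ X s) ^ 2 / K ^ 2) ∂μ ≤ 2)
    (κ : ℝ) (hκ : 1 ≤ κ)
    (hbound : ∀ v : Fin p → ℝ,
      κ⁻¹ * (v ⬝ᵥ v) ≤ v ⬝ᵥ (S⁻¹ *ᵥ v) ∧ v ⬝ᵥ (S⁻¹ *ᵥ v) ≤ κ * (v ⬝ᵥ v))
    (j : Fin p) :
    Integrable (fun s =>
        Real.exp ((X s j - ∑ k : {k : Fin p // k ≠ j}, alphaStar S j k * X s k.1) ^ 2 /
          (κ * K) ^ 2)) μ ∧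
      ∫ s, Real.exp ((X s j - ∑ k : {k : Fin p // k ≠ j}, alphaStar S j k * X s k.1) ^ 2 /
          (κ * K) ^ 2) ∂μ ≤ 2 := by
  have hκ0 : (0:ℝ) < κ := lt_of_lt_of_le one_pos hκ
  set α := alphaStar S j with hα
  set w : Fin p → ℝ := fun k => if h : k = j then 1 else -α ⟨k, h⟩ with hw
  -- w ⬝ᵥ y is the residual expression
  have h1 : ∀ y : Fin p → ℝ, w ⬝ᵥ y = y j - ∑ k : {k : Fin p // k ≠ j}, α k * y k.1 := by
    intro y
    show ∑ k, w k * y k = _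
    rw [sum_split j]
    simp only [hw, dif_pos rfl, one_mul]
    rw [sub_eq_add_neg, ← Finset.sum_neg_distrib]
    congr 1
    refine Finset.sum_congr rfl fun k _ => ?_
    rw [dif_neg k.2]
    ring
  -- determinant of the submatrix is a unit
  have hsubPD := delSub_posDef hS j
  have hdet : IsUnit (delSub S j).det := isUnit_iff_ne_zero.mpr hsubPD.det_pos.ne'
  have hSdet : IsUnit S.det := isUnit_iff_ne_zero.mpr hS.det_pos.ne'
  -- S *ᵥ w vanishes off coordinate j
  have hoff : ∀ k : Fin p, k ≠ j → (S *ᵥ w) k = 0 := by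
    intro k hk
    have halpha : delSub S j *ᵥ α = delCol S j := by
      rw [hα, alphaStar, mulVec_mulVec, Matrix.mul_nonsing_inv _ hdet, one_mulVec]
    show ∑ l, S k l * w l = 0
    rw [sum_split j]
    simp only [hw, dif_pos rfl, mul_one]
    have : ∑ l : {l : Fin p // l ≠ j}, S k l.1 * w l.1
        = -∑ l : {l : Fin p // l ≠ j}, delSub S j ⟨k, hk⟩ l * α l := by
      rw [← Finset.sum_neg_distrib]
      refine Finset.sum_congr rfl fun l _ => ?_
      have hwl : w l.1 = -α l := by simp only [hw]; rw [dif_neg l.2]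
      rw [hwl]
      simp only [delSub]
      ring
    rw [this]
    have := congrFun halpha ⟨k, hk⟩
    show S k j + -(delSub S j *ᵥ α) ⟨k, hk⟩ = 0
    rw [this]
    simp [delCol]
  set σ := (S *ᵥ w) j with hσdef
  have hww_eq : w ⬝ᵥ (S *ᵥ w) = σ := by
    show ∑ k, w k * (S *ᵥ w) k = σ
    rw [sum_split j]
    simp only [hw, dif_pos rfl, one_mul]
    have : ∀ k : {k : Fin p // k ≠ j}, w k.1 * (S *ᵥ w) k.1 = 0 := fun k => by
      rw [hoff k.1 k.2, mul_zero]
    rw [Finset.sum_congr rfl (fun k _ => this k), Finset.sum_const_zero, add_zero]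
  have hw0 : w ≠ 0 := by
    intro h
    have := congrFun h j
    simp [hw] at this
  have hσpos : 0 < σ := by
    have := hS.dotProduct_mulVec_pos hw0
    simp only [star_trivial] at this
    rwa [hww_eq] at this
  -- S *ᵥ w = σ at j, 0 elsewhere
  have hvv : (S *ᵥ w) ⬝ᵥ (S *ᵥ w) = σ ^ 2 := by
    show ∑ k, (S *ᵥ w) k * (S *ᵥ w) k = σ ^ 2
    rw [sum_split j]
    have : ∀ k : {k : Fin p // k ≠ j}, (S *ᵥ w) k.1 * (S *ᵥ w) k.1 = 0 := fun k => by
      rw [hoff k.1 k.2, mul_zero]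
    rw [Finset.sum_congr rfl (fun k _ => this k), Finset.sum_const_zero, add_zero, sq]
  have hSinvSw : S⁻¹ *ᵥ (S *ᵥ w) = w := by
    rw [mulVec_mulVec, Matrix.nonsing_inv_mul _ hSdet, one_mulVec]
  -- σ ≤ κ
  have hσκ : σ ≤ κ := by
    have := (hbound (S *ᵥ w)).1
    rw [hSinvSw, hvv, dotProduct_comm, hww_eq] at this
    have h2 : σ ^ 2 ≤ κ * σ := by
      have := mul_le_mul_of_nonneg_left this hκ0.le
      calc σ ^ 2 = κ * (κ⁻¹ * σ ^ 2) := by field_simp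
        _ ≤ κ * σ := this
    nlinarith [hσpos]
  -- w ⬝ᵥ w ≤ κ^2
  have hwwpos : 0 < w ⬝ᵥ w := by
    have hnn : 0 ≤ w ⬝ᵥ w := Finset.sum_nonneg fun k _ => mul_self_nonneg (w k)
    rcases lt_or_eq_of_le hnn with h | h
    · exact h
    · exact absurd (dotProduct_self_eq_zero.mp h.symm) hw0
  have hwwκ : w ⬝ᵥ w ≤ κ ^ 2 := by
    have hcs := cs_psd hS.posSemidef w (S⁻¹ *ᵥ w)
    have e1 : w ⬝ᵥ S *ᵥ (S⁻¹ *ᵥ w) = w ⬝ᵥ w := by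
      rw [mulVec_mulVec, Matrix.mul_nonsing_inv _ hSdet, one_mulVec]
    have e2 : (S⁻¹ *ᵥ w) ⬝ᵥ S *ᵥ (S⁻¹ *ᵥ w) = w ⬝ᵥ (S⁻¹ *ᵥ w) := by
      rw [mulVec_mulVec, Matrix.mul_nonsing_inv _ hSdet, one_mulVec, dotProduct_comm]
    rw [e1, e2, hww_eq] at hcs
    have hub := (hbound w).2
    have h3 : (w ⬝ᵥ w) ^ 2 ≤ σ * (κ * (w ⬝ᵥ w)) :=
      le_trans hcs (mul_le_mul_of_nonneg_left hub hσpos.le)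
    have h4 : σ * (κ * (w ⬝ᵥ w)) ≤ κ * (κ * (w ⬝ᵥ w)) :=
      mul_le_mul_of_nonneg_right hσκ (by positivity)
    nlinarith [hwwpos]
  -- apply the sub-Gaussian hypothesis to κ⁻¹ • w
  set v : Fin p → ℝ := κ⁻¹ • w with hv
  have hv1 : Real.sqrt (v ⬝ᵥ v) ≤ 1 := by
    rw [Real.sqrt_le_one]
    rw [hv, smul_dotProduct, dotProduct_smul]
    have : κ⁻¹ • (w ⬝ᵥ w) ≤ κ⁻¹ • κ ^ 2 := by
      exact smul_le_smul_of_nonneg_left hwwκ (by positivity)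
    calc κ⁻¹ • κ⁻¹ • (w ⬝ᵥ w) ≤ κ⁻¹ • κ⁻¹ • κ ^ 2 := by
          simp only [smul_eq_mul]
          have h2 : (0:ℝ) ≤ κ⁻¹ * κ⁻¹ := by positivity
          nlinarith
      _ = 1 := by rw [smul_eq_mul, smul_eq_mul, ← mul_assoc, ← sq, ← mul_pow, inv_mul_cancel₀ hκ0.ne', one_pow]
  have key : ∀ s, (X s j - ∑ k : {k : Fin p // k ≠ j}, alphaStar S j k * X s k.1) ^ 2 /
      (κ * K) ^ 2 = (v ⬝ᵥ X s) ^ 2 / K ^ 2 := by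
    intro s
    rw [← hα, ← h1 (X s), hv, smul_dotProduct]
    rw [smul_eq_mul, mul_pow]
    rw [div_eq_div_iff (by positivity) (by positivity)]
    field_simp
  have hfin := hsubG v hv1
  constructor
  · have := hfin.1
    simpa only [hα, key] using this
  · have := hfin.2
    calc ∫ s, Real.exp ((X s j - ∑ k : {k : Fin p // k ≠ j}, alphaStar S j k * X s k.1) ^ 2 /
          (κ * K) ^ 2) ∂μ
        = ∫ s, Real.exp ((v ⬝ᵥ X s) ^ 2 / K ^ 2) ∂μ := by
          exact integral_congr_ae (Filter.Eventually.of_forall fun s => by simp only [key])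
      _ ≤ 2 := this
end

section
/- Let A ⊆ {1,…,p}, i ∈ A, and k ∉ A. Then the i-th diagonal entry of the inverse of the principal submatrix satisfies ((Σ_{AA})⁻¹)_{ii} ≤ Ω_{ii} − Ω_{ik}²/Ω_{kk}. -/
open Matrix

/-- The principal submatrix `S_{AA}` of `S` indexed by `A`. -/
def subIdx {p : ℕ} (S : Matrix (Fin p) (Fin p) ℝ) (A : Finset (Fin p)) :
    Matrix ↥A ↥A ℝ :=
  fun k l => S k.1 l.1

/-- Extension of a vector on `A` by zero. -/
def extZero {p : ℕ} (A : Finset (Fin p)) (x : ↥A → ℝ) : Fin p → ℝ :=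
  fun j => if h : j ∈ A then x ⟨j, h⟩ else 0

lemma sum_extZero {p : ℕ} (A : Finset (Fin p)) (x : ↥A → ℝ) (g : Fin p → ℝ) :
    ∑ l : Fin p, g l * extZero A x l = ∑ b : ↥A, g b.1 * x b :=
  calc ∑ l : Fin p, g l * extZero A x l
      = ∑ l ∈ A, g l * extZero A x l :=
        (Finset.sum_subset (Finset.subset_univ A) (fun l _ hl => by simp [extZero, hl])).symm
    _ = ∑ b : ↥A, g b.1 * extZero A x b.1 :=
        (Finset.sum_coe_sort A (fun l => g l * extZero A x l)).symm
    _ = ∑ b : ↥A, g b.1 * x b := Finset.sum_congr rfl (fun b _ => by simp [extZero])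

lemma extZero_quad {p : ℕ} (S : Matrix (Fin p) (Fin p) ℝ) (A : Finset (Fin p))
    (x : ↥A → ℝ) :
    extZero A x ⬝ᵥ (S *ᵥ extZero A x) = x ⬝ᵥ (subIdx S A *ᵥ x) := by
  simp only [dotProduct, mulVec]
  have : ∀ l : Fin p, extZero A x l * (∑ j, S l j * extZero A x j)
      = (fun j => ∑ b : ↥A, S j b.1 * x b) l * extZero A x l := by
    intro l; rw [mul_comm, sum_extZero A x (fun j => S l j)]
  rw [Finset.sum_congr rfl (fun l _ => this l),
    sum_extZero A x (fun j => ∑ b : ↥A, S j b.1 * x b)]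
  exact Finset.sum_congr rfl (fun a _ => by rw [mul_comm]; rfl)

lemma subIdx_posDef {p : ℕ} {S : Matrix (Fin p) (Fin p) ℝ} (hS : S.PosDef)
    (A : Finset (Fin p)) : (subIdx S A).PosDef := by
  refine Matrix.PosDef.of_dotProduct_mulVec_pos ?_ (fun x hx => ?_)
  · ext a b
    have := congrFun (congrFun hS.isHermitian.eq a.1) b.1
    simpa [Matrix.conjTranspose, subIdx] using this
  · have hyne : extZero A x ≠ 0 := by
      intro h
      apply hx
      funext a
      have := congrFun h a.1
      simpa [extZero, a.2] using this
    have hpos := hS.dotProduct_mulVec_pos hyne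
    rw [star_trivial, extZero_quad S A x] at hpos
    simpa using hpos

lemma dot_aux {p : ℕ} (c : ℝ) (i k : Fin p) (u : Fin p → ℝ) :
    ∑ j, u j * ((Pi.single i 1 : Fin p → ℝ) j - c * (Pi.single k 1 : Fin p → ℝ) j) = u i - c * u k := by
  simp [Pi.single_apply, mul_sub, mul_ite, Finset.sum_sub_distrib, mul_comm, mul_assoc]

lemma key_ineq {p : ℕ} {S : Matrix (Fin p) (Fin p) ℝ} (hS : S.PosDef)
    (i k : Fin p) (hik : i ≠ k) (x : Fin p → ℝ) (hxk : x k = 0) :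
    2 * x i - x ⬝ᵥ (S *ᵥ x) ≤ S⁻¹ i i - (S⁻¹ i k) ^ 2 / S⁻¹ k k := by
  have hdet : IsUnit S.det := (Matrix.isUnit_iff_isUnit_det S).mp hS.isUnit
  have hΩ : (S⁻¹).PosDef := hS.inv
  have hkk : 0 < S⁻¹ k k := by
    have hne : (Pi.single k (1 : ℝ) : Fin p → ℝ) ≠ 0 := by
      intro h; have := congrFun h k; simp at this
    have := hΩ.dotProduct_mulVec_pos hne
    simpa [single_dotProduct, Matrix.mulVec_single] using this
  have hsymm : S⁻¹ k i = S⁻¹ i k := by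
    have := congrFun (congrFun hΩ.isHermitian.eq i) k
    simpa [Matrix.conjTranspose] using this
  have hST : Sᵀ = S := by
    ext a b
    have := congrFun (congrFun hS.isHermitian.eq a) b
    simpa [Matrix.conjTranspose] using this
  set c : ℝ := S⁻¹ i k / S⁻¹ k k with hc
  set w : Fin p → ℝ := fun j => (Pi.single i 1 : Fin p → ℝ) j - c * (Pi.single k 1 : Fin p → ℝ) j with hw
  set v : Fin p → ℝ := S⁻¹ *ᵥ w with hv
  have hSv : S *ᵥ v = w := by
    rw [hv, Matrix.mulVec_mulVec, Matrix.mul_nonsing_inv S hdet, Matrix.one_mulVec]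
  have h0 : 0 ≤ (x - v) ⬝ᵥ (S *ᵥ (x - v)) := by
    have := hS.posSemidef.dotProduct_mulVec_nonneg (x - v)
    simpa using this
  have hexp : (x - v) ⬝ᵥ (S *ᵥ (x - v))
      = x ⬝ᵥ (S *ᵥ x) - x ⬝ᵥ w - v ⬝ᵥ (S *ᵥ x) + v ⬝ᵥ w := by
    rw [Matrix.mulVec_sub, dotProduct_sub, sub_dotProduct,
      sub_dotProduct, hSv]
    ring
  have hvSx : v ⬝ᵥ (S *ᵥ x) = w ⬝ᵥ x := by
    rw [Matrix.dotProduct_mulVec, ← Matrix.mulVec_transpose, hST, hSv]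
  have hxw : x ⬝ᵥ w = x i := by
    have := dot_aux c i k x
    simp only [dotProduct, hw]
    rw [this, hxk]; ring
  have hwx : w ⬝ᵥ x = x i := by
    rw [dotProduct_comm]
    have := dot_aux c i k x
    simp only [dotProduct, hw]
    rw [this, hxk]; ring
  have hvj : ∀ j, v j = S⁻¹ j i - c * S⁻¹ j k := by
    intro j
    simp only [hv, hw, mulVec, dotProduct]
    exact dot_aux c i k (fun l => S⁻¹ j l)
  have hvw : v ⬝ᵥ w = v i - c * v k := by
    simp only [dotProduct, hw]
    exact dot_aux c i k v
  have hval : v ⬝ᵥ w = S⁻¹ i i - (S⁻¹ i k) ^ 2 / S⁻¹ k k := by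
    rw [hvw, hvj i, hvj k, hsymm, hc]
    have hkk' : S⁻¹ k k ≠ 0 := ne_of_gt hkk
    generalize S⁻¹ i i = a at *
    generalize hb : S⁻¹ i k = b at *
    generalize hd : S⁻¹ k k = d at *
    field_simp
    ring
  rw [hexp, hvSx, hwx, hxw, hval] at h0
  linarith

/-- For `i ∈ A` and `k ∉ A`, the `i`-th diagonal entry of the inverse of the principal
submatrix satisfies `((Σ_{AA})⁻¹)_{ii} ≤ Ω_{ii} − Ω_{ik}²/Ω_{kk}` where `Ω = Σ⁻¹`. -/
theorem stmt_12 (p : ℕ) (S : Matrix (Fin p) (Fin p) ℝ) (hS : S.PosDef)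
    (A : Finset (Fin p)) (i k : Fin p) (hi : i ∈ A) (hk : k ∉ A) :
    (subIdx S A)⁻¹ ⟨i, hi⟩ ⟨i, hi⟩ ≤ S⁻¹ i i - (S⁻¹ i k) ^ 2 / S⁻¹ k k := by
  have hM : (subIdx S A).PosDef := subIdx_posDef hS A
  have hMdet : IsUnit (subIdx S A).det := (Matrix.isUnit_iff_isUnit_det _).mp hM.isUnit
  set i' : ↥A := ⟨i, hi⟩ with hi'
  set y : ↥A → ℝ := fun a => (subIdx S A)⁻¹ a i' with hy
  have hMy : subIdx S A *ᵥ y = Pi.single i' 1 := by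
    have h1 : y = (subIdx S A)⁻¹ *ᵥ Pi.single i' 1 := by
      funext a; simp [hy, Matrix.mulVec_single]
    rw [h1, Matrix.mulVec_mulVec, Matrix.mul_nonsing_inv _ hMdet, Matrix.one_mulVec]
  have hquad : y ⬝ᵥ (subIdx S A *ᵥ y) = (subIdx S A)⁻¹ i' i' := by
    rw [hMy, dotProduct_single, mul_one]
  set x : Fin p → ℝ := extZero A y with hx
  have hxi : x i = (subIdx S A)⁻¹ i' i' := by simp [hx, extZero, hi, hy, hi']
  have hxk : x k = 0 := by simp [hx, extZero, hk]
  have hik : i ≠ k := fun h => hk (h ▸ hi)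
  have hkey := key_ineq hS i k hik x hxk
  rw [hx, extZero_quad S A y, hquad] at hkey
  rw [hx] at hxi
  rw [hxi] at hkey
  linarith
end
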